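/- Let (H,R,ψ,J,k) be an almost cylindrical bialgebra: (ψ,J) is a twist pair (ψ is an algebra automorphism, J a Drinfeld twist with Δ^{op,ψ}(x) = J·Δ(x)·J⁻¹ for all x and (ψ⊗ψ)(R₂₁) = J₂₁·R·J⁻¹) and k ∈ H is invertible with Δ(k) = J⁻¹·(1⊗k)·(ψ⊗id)(R)·(k⊗1). Then k satisfies the ψ-twisted reflection equation (k⊗1)·(R^ψ)₂₁·(1⊗k)·R = (ψ⊗ψ)(R₂₁)·(1⊗k)·R^ψ·(k⊗1), where R^ψ := (ψ⊗id)(R). -/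

import Mathlib

noncomputable section
open TensorProduct

variable (F : Type*) [CommRing F] (H : Type*) [Ring H] [Bialgebra F H]

/-- The flip map on `H ⊗ H`. -/
def τ₂ : H ⊗[F] H ≃ₐ[F] H ⊗[F] H := Algebra.TensorProduct.comm F H H

/-- Embedding of `H ⊗ H` into the first two factors of `(H ⊗ H) ⊗ H`. -/
def ι₁₂ : H ⊗[F] H →ₐ[F] (H ⊗[F] H) ⊗[F] H := Algebra.TensorProduct.includeLeft

/-- Embedding of `H ⊗ H` into the last two factors of `(H ⊗ H) ⊗ H`. -/
def ι₂₃ : H ⊗[F] H →ₐ[F] (H ⊗[F] H) ⊗[F] H :=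
  Algebra.TensorProduct.map Algebra.TensorProduct.includeRight (AlgHom.id F H)

/-- Embedding of `H ⊗ H` into the outer factors of `(H ⊗ H) ⊗ H`. -/
def ι₁₃ : H ⊗[F] H →ₐ[F] (H ⊗[F] H) ⊗[F] H :=
  Algebra.TensorProduct.map Algebra.TensorProduct.includeLeft (AlgHom.id F H)

/-- The image in `(H⊗H)ˣ` of a unit under the flip map. -/
def uflip (R : (H ⊗[F] H)ˣ) : (H ⊗[F] H)ˣ :=
  ⟨τ₂ F H ↑R, τ₂ F H ↑R⁻¹,
    by rw [← map_mul, Units.mul_inv, map_one],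
    by rw [← map_mul, Units.inv_mul, map_one]⟩

/-- Conjugation by a unit, as an algebra automorphism. -/
def Ad {A : Type*} [Ring A] [Algebra F A] (u : Aˣ) : A ≃ₐ[F] A where
  toFun x := ↑u * x * ↑u⁻¹
  invFun x := ↑u⁻¹ * x * ↑u
  left_inv x := by simp [mul_assoc]
  right_inv x := by simp [mul_assoc]
  map_mul' x y := by simp [mul_assoc]
  map_add' x y := by (try dsimp only); rw [mul_add, add_mul]
  commutes' r := by (try dsimp only); rw [← Algebra.commutes, mul_assoc, Units.mul_inv, mul_one]

/-- The unit `(g ⊗ g)` of `H ⊗ H` attached to a unit `g` of `H`. -/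
def uTmul (g : Hˣ) : (H ⊗[F] H)ˣ :=
  ⟨(↑g : H) ⊗ₜ[F] (↑g : H), (↑g⁻¹ : H) ⊗ₜ[F] (↑g⁻¹ : H),
    by rw [Algebra.TensorProduct.tmul_mul_tmul, Units.mul_inv, ← Algebra.TensorProduct.one_def],
    by rw [Algebra.TensorProduct.tmul_mul_tmul, Units.inv_mul, ← Algebra.TensorProduct.one_def]⟩

/-- The comultiplication of the bialgebra `H`. -/
def Δ : H →ₐ[F] H ⊗[F] H := Bialgebra.comulAlgHom F H

/-- The counit of the bialgebra `H`. -/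
def ε : H →ₐ[F] F := Bialgebra.counitAlgHom F H

/-- The opposite comultiplication `Δ^op = flip ∘ Δ`. -/
def Δop : H →ₐ[F] H ⊗[F] H := (τ₂ F H).toAlgHom.comp (Δ F H)

/-- `(Δ ⊗ id)` as a map `H ⊗ H → (H ⊗ H) ⊗ H`. -/
def Δ₁ : H ⊗[F] H →ₐ[F] (H ⊗[F] H) ⊗[F] H :=
  Algebra.TensorProduct.map (Δ F H) (AlgHom.id F H)

/-- `(id ⊗ Δ)`, reassociated into `(H ⊗ H) ⊗ H`. -/
def Δ₂ : H ⊗[F] H →ₐ[F] (H ⊗[F] H) ⊗[F] H :=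
  ((Algebra.TensorProduct.assoc F F F H H H).symm.toAlgHom).comp
    (Algebra.TensorProduct.map (AlgHom.id F H) (Δ F H))

/-- Quasitriangularity of an invertible `R ∈ H ⊗ H` with respect to a coproduct `Δ'`:
`R Δ'(x) = Δ'^op(x) R`, `(Δ'⊗id)(R) = R₁₃R₂₃` and `(id⊗Δ')(R) = R₁₃R₁₂`. -/
def IsQuasiTri (Δ' : H →ₐ[F] H ⊗[F] H) (R : (H ⊗[F] H)ˣ) : Prop :=
  (∀ x : H, (↑R : H ⊗[F] H) * Δ' x = τ₂ F H (Δ' x) * ↑R) ∧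
  (Algebra.TensorProduct.map Δ' (AlgHom.id F H)) (↑R : H ⊗[F] H)
      = ι₁₃ F H ↑R * ι₂₃ F H ↑R ∧
  ((Algebra.TensorProduct.assoc F F F H H H).symm
      ((Algebra.TensorProduct.map (AlgHom.id F H) Δ') (↑R : H ⊗[F] H)))
      = ι₁₃ F H ↑R * ι₁₂ F H ↑R

/-- The unit of `H ⊗ H` obtained by applying `Δ` to a unit of `H`. -/
def uComul (g : Hˣ) : (H ⊗[F] H)ˣ :=
  ⟨Δ F H ↑g, Δ F H ↑g⁻¹,
    by rw [← map_mul, Units.mul_inv, map_one],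
    by rw [← map_mul, Units.inv_mul, map_one]⟩

/-- A Drinfeld twist: an invertible `J ∈ H ⊗ H` with `(ε⊗id)(J) = 1 = (id⊗ε)(J)`
satisfying the cocycle identity `(J⊗1)(Δ⊗id)(J) = (1⊗J)(id⊗Δ)(J)`. -/
def IsTwist (J : (H ⊗[F] H)ˣ) : Prop :=
  (Algebra.TensorProduct.lid F H)
      ((Algebra.TensorProduct.map (ε F H) (AlgHom.id F H)) ↑J) = 1 ∧
  (Algebra.TensorProduct.rid F F H)
      ((Algebra.TensorProduct.map (AlgHom.id F H) (ε F H)) ↑J) = 1 ∧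
  ι₁₂ F H ↑J * Δ₁ F H ↑J = ι₂₃ F H ↑J * Δ₂ F H ↑J

/-- A twist pair `(ψ, J)`: `Δ^{op,ψ} = Ad(J) ∘ Δ` and `(ψ⊗ψ)(R₂₁) = J₂₁ R J⁻¹`. -/
def TwistPair (R : (H ⊗[F] H)ˣ) (ψ : H ≃ₐ[F] H) (J : (H ⊗[F] H)ˣ) : Prop :=
  (∀ x : H, (Algebra.TensorProduct.map ψ.toAlgHom ψ.toAlgHom)
      (τ₂ F H (Δ F H (ψ.symm x))) = ↑J * Δ F H x * ↑J⁻¹) ∧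
  ((Algebra.TensorProduct.map ψ.toAlgHom ψ.toAlgHom) (τ₂ F H ↑R)
      = ↑(uflip F H J) * ↑R * ↑J⁻¹)

/-- in an almost cylindrical bialgebra `(H,R,ψ,J,k)`, the twisted
k-matrix `k` satisfies the `ψ`-twisted reflection equation
`(k⊗1)·(R^ψ)₂₁·(1⊗k)·R = (ψ⊗ψ)(R₂₁)·(1⊗k)·R^ψ·(k⊗1)` with `R^ψ = (ψ⊗id)(R)`. -/
theorem twisted_reflection_equation (R J : (H ⊗[F] H)ˣ) (ψ : H ≃ₐ[F] H) (k : Hˣ)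
    (hR : IsQuasiTri F H (Δ F H) R) (hJ : IsTwist F H J)
    (hpair : TwistPair F H R ψ J)
    (hk : Δ F H ↑k
        = ↑J⁻¹ * ((1 : H) ⊗ₜ[F] (↑k : H))
            * (Algebra.TensorProduct.map ψ.toAlgHom (AlgHom.id F H)) ↑R
            * ((↑k : H) ⊗ₜ[F] (1 : H))) :
    ((↑k : H) ⊗ₜ[F] (1 : H))
        * τ₂ F H ((Algebra.TensorProduct.map ψ.toAlgHom (AlgHom.id F H)) ↑R)
        * ((1 : H) ⊗ₜ[F] (↑k : H)) * ↑R
      = (Algebra.TensorProduct.map ψ.toAlgHom ψ.toAlgHom) (τ₂ F H ↑R)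
        * ((1 : H) ⊗ₜ[F] (↑k : H))
        * (Algebra.TensorProduct.map ψ.toAlgHom (AlgHom.id F H)) ↑R
        * ((↑k : H) ⊗ₜ[F] (1 : H)) := by
  obtain ⟨hRΔ, -, -⟩ := hR
  have h1 := hRΔ ↑k
  rw [hk] at h1
  have h2 := hpair.2
  have huf : (↑(uflip F H J) : H ⊗[F] H) = τ₂ F H ↑J := rfl
  rw [huf] at h2
  have hRJ : (↑R : H ⊗[F] H) * ↑J⁻¹
      = τ₂ F H (↑J⁻¹ : H ⊗[F] H)
        * (Algebra.TensorProduct.map ψ.toAlgHom ψ.toAlgHom) (τ₂ F H ↑R) := by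
    rw [h2, ← mul_assoc, ← mul_assoc, ← map_mul, Units.inv_mul, map_one, one_mul]
  have hinv : IsUnit (τ₂ F H (↑J⁻¹ : H ⊗[F] H)) :=
    (Units.isUnit J⁻¹).map (τ₂ F H)
  apply hinv.mul_left_cancel
  simp only [map_mul, Algebra.TensorProduct.comm_tmul, τ₂, ← mul_assoc] at h1 ⊢
  simp only [τ₂] at hRJ
  rw [← hRJ]
  exact h1.symm

end
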